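/- Assume Γ ⊆ ℒ is consistent and compositional. Let π be a maximal model of Γ and π' any model of Γ. Then V_{π'} ⊆ V_π; furthermore V_{π'} = V_π if and only if π' is a maximal model of Γ; and for any outcomes α, β, if α ≡_π β then α ≡_{π''} β for every model π'' of Γ. -/

import Mathlib

namespace LexPref

/-- A pair consisting of a variable and a total order (as a binary relation) on its domain. -/
structure LexPair (ι : Type*) (D : ι → Type*) where
  var : ι
  ord : D var → D var → Prop
  isLin : IsLinearOrder (D var) ord

/-- An outcome assigns a value to every variable. -/
abbrev Outcome (ι : Type*) (D : ι → Type*) := ∀ i, D i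

/-- A lexicographic model: a list of pairs (variable, total order) with pairwise
distinct variables. -/
abbrev LexModel (ι : Type*) (D : ι → Type*) :=
  { l : List (LexPair ι D) // (l.map LexPair.var).Nodup }

variable {ι : Type*} {D : ι → Type*}

/-- The list of variables occurring in a lex model. -/
def vars (π : LexModel ι D) : List ι := π.1.map LexPair.var

/-- The empty lex model. -/
def emptyModel : LexModel ι D := ⟨[], List.nodup_nil⟩

/-- Composition of lex models: `π` followed by the pairs of `π'` whose variable does
not occur in `π`. -/
def comp [DecidableEq ι] (π π' : LexModel ι D) : LexModel ι D :=
  ⟨π.1 ++ π'.1.filter (fun p => decide (p.var ∉ vars π)), by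
    have h1 : (π'.1.filter (fun p => decide (p.var ∉ vars π))).Sublist π'.1 :=
      List.filter_sublist
    rw [List.map_append, List.nodup_append]
    refine ⟨π.2, (h1.map LexPair.var).nodup π'.2, ?_⟩
    intro x hx y hy hxy
    obtain ⟨p, hp, rfl⟩ := List.mem_map.mp hy
    have hd := List.of_mem_filter hp
    simp only [decide_eq_true_eq] at hd
    subst hxy
    exact hd hx⟩

/-- `π'` extends `π`: `π' ≠ π` and the sequence `π'` begins with `π`. -/
def Extends (π' π : LexModel ι D) : Prop := π' ≠ π ∧ π.1 <+: π'.1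

/-- `π' ⊒ π`: `π'` extends or equals `π`. -/
def ExtendsEq (π' π : LexModel ι D) : Prop := π.1 <+: π'.1

/-- Lexicographic weak preference along a list of pairs. -/
def prefList : List (LexPair ι D) → Outcome ι D → Outcome ι D → Prop
  | [], _, _ => True
  | p :: rest, α, β =>
      (α p.var ≠ β p.var ∧ p.ord (α p.var) (β p.var)) ∨
      (α p.var = β p.var ∧ prefList rest α β)

/-- Lexicographic strict preference along a list of pairs. -/
def sprefList : List (LexPair ι D) → Outcome ι D → Outcome ι D → Prop
  | [], _, _ => False
  | p :: rest, α, β =>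
      (α p.var ≠ β p.var ∧ p.ord (α p.var) (β p.var)) ∨
      (α p.var = β p.var ∧ sprefList rest α β)

/-- `α ≽_π β`. -/
def pref (π : LexModel ι D) (α β : Outcome ι D) : Prop := prefList π.1 α β

/-- `α ≻_π β`. -/
def spref (π : LexModel ι D) (α β : Outcome ι D) : Prop := sprefList π.1 α β

/-- `α ≡_π β`: the outcomes agree on all variables of `π`. -/
def eqOn (π : LexModel ι D) (α β : Outcome ι D) : Prop := ∀ X ∈ vars π, α X = β X

section Language

variable {L : Type*} (sat : LexModel ι D → L → Prop)

/-- `π ⊨ Γ`. -/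
def satSet (π : LexModel ι D) (Γ : Set L) : Prop := ∀ φ ∈ Γ, sat π φ

/-- `Γ` is consistent: some lex model satisfies it. -/
def Consistent (Γ : Set L) : Prop := ∃ π, satSet sat π Γ

/-- `π ⊨* φ`: some `π' ⊒ π` satisfies `φ`. -/
def satStar (π : LexModel ι D) (φ : L) : Prop := ∃ π', ExtendsEq π' π ∧ sat π' φ

/-- `π ⊨* Γ`. -/
def satStarSet (π : LexModel ι D) (Γ : Set L) : Prop := ∀ φ ∈ Γ, satStar sat π φ

/-- `φ` is compositional. -/
def CompositionalStmt [DecidableEq ι] (φ : L) : Prop :=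
  ∀ π π', sat π φ → sat π' φ → sat (comp π π') φ

/-- `Γ` is compositional. -/
def Compositional [DecidableEq ι] (Γ : Set L) : Prop :=
  ∀ φ ∈ Γ, CompositionalStmt sat φ

/-- `φ` is strongly compositional. -/
def StronglyCompositionalStmt [DecidableEq ι] (φ : L) : Prop :=
  ∀ π π', satStar sat π φ → sat π' φ → sat (comp π π') φ

/-- `Γ` is strongly compositional. -/
def StronglyCompositional [DecidableEq ι] (Γ : Set L) : Prop :=
  ∀ φ ∈ Γ, StronglyCompositionalStmt sat φ

/-- `π` is a maximal model of `Γ`. -/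
def MaximalModel (π : LexModel ι D) (Γ : Set L) : Prop :=
  satSet sat π Γ ∧ ∀ π', Extends π' π → ¬ satSet sat π' Γ

/-- `π` is a maximal `⊨*`-model of `Γ`. -/
def MaximalStarModel (π : LexModel ι D) (Γ : Set L) : Prop :=
  satStarSet sat π Γ ∧ ∀ π', Extends π' π → ¬ satStarSet sat π' Γ

end Language

/-- `O_σ(𝒜)`: the optimal elements of `A` with respect to `σ`. -/
def opt (σ : LexModel ι D) (A : Set (Outcome ι D)) : Set (Outcome ι D) :=
  {α ∈ A | ∀ β ∈ A, pref σ α β}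

/-- Iterated optimisation `𝒜_{π₁,…,π_k}`. -/
def iterOpt : List (LexModel ι D) → Set (Outcome ι D) → Set (Outcome ι D)
  | [], A => A
  | σ :: rest, A => iterOpt rest (opt σ A)

end LexPref

namespace LexPref

lemma comp_eq_of_maximal {ι : Type*} {D : ι → Type*} [DecidableEq ι] {L : Type*}
    (sat : LexModel ι D → L → Prop) (Γ : Set L)
    (hcomp : Compositional sat Γ) {π π' : LexModel ι D}
    (hmax : MaximalModel sat π Γ) (h' : satSet sat π' Γ) :
    comp π π' = π := by
  have hsat : satSet sat (comp π π') Γ :=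
    fun φ hφ => hcomp φ hφ π π' (hmax.1 φ hφ) (h' φ hφ)
  by_contra h
  exact hmax.2 _ ⟨h, ⟨_, rfl⟩⟩ hsat

lemma vars_subset_of_maximal {ι : Type*} {D : ι → Type*} [DecidableEq ι] {L : Type*}
    (sat : LexModel ι D → L → Prop) (Γ : Set L)
    (hcomp : Compositional sat Γ) {π π' : LexModel ι D}
    (hmax : MaximalModel sat π Γ) (h' : satSet sat π' Γ) :
    ∀ X ∈ vars π', X ∈ vars π := by
  have hc := comp_eq_of_maximal sat Γ hcomp hmax h'
  have hval : π.1 ++ π'.1.filter (fun p => decide (p.var ∉ vars π)) = π.1 :=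
    congrArg Subtype.val hc
  have hnil : π'.1.filter (fun p => decide (p.var ∉ vars π)) = [] := by
    have := congrArg List.length hval
    simp only [List.length_append] at this
    exact List.eq_nil_of_length_eq_zero (by omega)
  intro X hX
  obtain ⟨p, hp, rfl⟩ := List.mem_map.mp hX
  by_contra hnotin
  have hmem : p ∈ π'.1.filter (fun p => decide (p.var ∉ vars π)) :=
    List.mem_filter.mpr ⟨hp, by simpa using hnotin⟩
  rw [hnil] at hmem
  exact List.not_mem_nil hmem

/-- for consistent compositional `Γ`, with `π` a maximal model and
`π'` any model: `V_{π'} ⊆ V_π`; `V_{π'} = V_π` iff `π'` is maximal; and outcomes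
equivalent in `π` are equivalent in every model of `Γ`. -/
theorem maximal_model_properties {ι : Type*} {D : ι → Type*} [DecidableEq ι]
    [Fintype ι] [∀ i, Fintype (D i)] {L : Type*}
    (sat : LexModel ι D → L → Prop) (Γ : Set L)
    (hcons : Consistent sat Γ) (hcomp : Compositional sat Γ)
    (π π' : LexModel ι D)
    (hmax : MaximalModel sat π Γ) (h' : satSet sat π' Γ) :
    (vars π').toFinset ⊆ (vars π).toFinset ∧
    ((vars π').toFinset = (vars π).toFinset ↔ MaximalModel sat π' Γ) ∧
    (∀ α β : Outcome ι D, eqOn π α β →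
      ∀ π'', satSet sat π'' Γ → eqOn π'' α β) := by
  have hsub : ∀ X ∈ vars π', X ∈ vars π :=
    vars_subset_of_maximal sat Γ hcomp hmax h'
  refine ⟨fun X hX => List.mem_toFinset.mpr (hsub X (List.mem_toFinset.mp hX)), ?_, ?_⟩
  · constructor
    · intro heq
      refine ⟨h', fun π'' hext hsat'' => ?_⟩
      have hsub'' : ∀ X ∈ vars π'', X ∈ vars π :=
        vars_subset_of_maximal sat Γ hcomp hmax hsat''
      -- cardinalities
      have hnd : (vars π'').Nodup := π''.2
      have hnd' : (vars π').Nodup := π'.2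
      have hndπ : (vars π).Nodup := π.2
      have hlen : π'.1.length < π''.1.length := by
        rcases hext with ⟨hne, hpre⟩
        rcases lt_or_eq_of_le hpre.length_le with h | h
        · exact h
        · exact absurd ((Subtype.ext (hpre.eq_of_length h)).symm) hne
      have hcard'' : (vars π'').toFinset.card = π''.1.length := by
        rw [List.toFinset_card_of_nodup hnd]; simp [vars]
      have hcard' : (vars π').toFinset.card = π'.1.length := by
        rw [List.toFinset_card_of_nodup hnd']; simp [vars]
      have hle : (vars π'').toFinset.card ≤ (vars π').toFinset.card := by
        apply Finset.card_le_card
        intro X hX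
        rw [heq]
        exact List.mem_toFinset.mpr (hsub'' X (List.mem_toFinset.mp hX))
      omega
    · intro hmax'
      have hsub2 : ∀ X ∈ vars π, X ∈ vars π' :=
        vars_subset_of_maximal sat Γ hcomp hmax' hmax.1
      apply Finset.Subset.antisymm
      · exact fun X hX => List.mem_toFinset.mpr (hsub X (List.mem_toFinset.mp hX))
      · exact fun X hX => List.mem_toFinset.mpr (hsub2 X (List.mem_toFinset.mp hX))
  · intro α β hαβ π'' hsat'' X hX
    exact hαβ X (vars_subset_of_maximal sat Γ hcomp hmax hsat'' X hX)

end LexPref
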